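/- Let ν, n ∈ ℝ³ be unit vectors with n·ν = 0, let q ∈ ℝ, and set Q̄ := q n⊗n + ((1−q)/2)(I − ν⊗ν) − (1/3)I. Then tr(Q̄²) = 1/6 + q²/2 and tr(Q̄³) = −1/36 + q²/4. Consequently, for any real constants F, A, B, C the Landau–de Gennes density satisfies F + (A/2) tr(Q̄²) − (B/3) tr(Q̄³) + (C/4) (tr Q̄²)² = [F + A/12 + B/108 + C/144] + (A/4 − B/12 + C/24) q² + (C/16) q⁴. -/
import Mathlib


noncomputable section

/-- Euclidean dot product on `ℝ³`. -/
def dot3 (u v : Fin 3 → ℝ) : ℝ := ∑ i, u i * v i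

/-- tensor (outer) product `u ⊗ v`. -/
def tensor3 (u v : Fin 3 → ℝ) : Matrix (Fin 3) (Fin 3) ℝ := Matrix.of fun i j => u i * v j

/-- For unit vectors `ν, n` with `n·ν = 0` and
`Q̄ = q n⊗n + ((1−q)/2)(I − ν⊗ν) − (1/3)I`, one has `tr(Q̄²) = 1/6 + q²/2` and
`tr(Q̄³) = −1/36 + q²/4`; consequently the Landau–de Gennes density reduces to a
two-constant potential in `q`. -/
theorem landau_de_gennes_surface_potential
    (ν n : Fin 3 → ℝ) (hν : dot3 ν ν = 1) (hn : dot3 n n = 1) (hnν : dot3 n ν = 0)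
    (q : ℝ) :
    Matrix.trace
        ((q • tensor3 n n + ((1 - q) / 2) • ((1 : Matrix (Fin 3) (Fin 3) ℝ) - tensor3 ν ν) -
            (1 / 3 : ℝ) • (1 : Matrix (Fin 3) (Fin 3) ℝ)) ^ 2) = 1 / 6 + q ^ 2 / 2 ∧
      Matrix.trace
        ((q • tensor3 n n + ((1 - q) / 2) • ((1 : Matrix (Fin 3) (Fin 3) ℝ) - tensor3 ν ν) -
            (1 / 3 : ℝ) • (1 : Matrix (Fin 3) (Fin 3) ℝ)) ^ 3) = -(1 / 36) + q ^ 2 / 4 ∧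
      ∀ F A B C : ℝ,
        F + A / 2 * Matrix.trace
            ((q • tensor3 n n + ((1 - q) / 2) • ((1 : Matrix (Fin 3) (Fin 3) ℝ) - tensor3 ν ν) -
                (1 / 3 : ℝ) • (1 : Matrix (Fin 3) (Fin 3) ℝ)) ^ 2) -
          B / 3 * Matrix.trace
            ((q • tensor3 n n + ((1 - q) / 2) • ((1 : Matrix (Fin 3) (Fin 3) ℝ) - tensor3 ν ν) -
                (1 / 3 : ℝ) • (1 : Matrix (Fin 3) (Fin 3) ℝ)) ^ 3) +
          C / 4 * (Matrix.trace
            ((q • tensor3 n n + ((1 - q) / 2) • ((1 : Matrix (Fin 3) (Fin 3) ℝ) - tensor3 ν ν) -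
                (1 / 3 : ℝ) • (1 : Matrix (Fin 3) (Fin 3) ℝ)) ^ 2)) ^ 2 =
        (F + A / 12 + B / 108 + C / 144) + (A / 4 - B / 12 + C / 24) * q ^ 2 + C / 16 * q ^ 4 := by
  have h2 : Matrix.trace
      ((q • tensor3 n n + ((1 - q) / 2) • ((1 : Matrix (Fin 3) (Fin 3) ℝ) - tensor3 ν ν) -
          (1 / 3 : ℝ) • (1 : Matrix (Fin 3) (Fin 3) ℝ)) ^ 2) = 1 / 6 + q ^ 2 / 2 := by
    simp only [dot3, Fin.sum_univ_three] at hν hn hnν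
    simp only [pow_two, Matrix.trace_fin_three, Matrix.mul_apply, Fin.sum_univ_three,
      Matrix.sub_apply, Matrix.add_apply, Matrix.smul_apply, Matrix.one_apply, tensor3,
      Matrix.of_apply, smul_eq_mul]
    norm_num [Fin.ext_iff]
    set a := n 0 * n 0 + n 1 * n 1 + n 2 * n 2 with ha
    set b := ν 0 * ν 0 + ν 1 * ν 1 + ν 2 * ν 2 with hb
    set c := n 0 * ν 0 + n 1 * ν 1 + n 2 * ν 2 with hc
    linear_combination (q^2*(a+1) + 2*q*((1-q)/2 - 1/3)) * hn
      + (((1-q)/2)^2*(b+1) - 2*((1-q)/2)*((1-q)/2 - 1/3)) * hν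
      + (-2*q*((1-q)/2)*c) * hnν
  have h3 : Matrix.trace
      ((q • tensor3 n n + ((1 - q) / 2) • ((1 : Matrix (Fin 3) (Fin 3) ℝ) - tensor3 ν ν) -
          (1 / 3 : ℝ) • (1 : Matrix (Fin 3) (Fin 3) ℝ)) ^ 3) = -(1 / 36) + q ^ 2 / 4 := by
    simp only [dot3, Fin.sum_univ_three] at hν hn hnν
    simp only [pow_succ, pow_zero, one_mul, Matrix.trace_fin_three, Matrix.mul_apply,
      Fin.sum_univ_three, Matrix.sub_apply, Matrix.add_apply, Matrix.smul_apply, Matrix.one_apply,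
      tensor3, Matrix.of_apply, smul_eq_mul]
    norm_num [Fin.ext_iff]
    set a := n 0 * n 0 + n 1 * n 1 + n 2 * n 2 with ha
    set b := ν 0 * ν 0 + ν 1 * ν 1 + ν 2 * ν 2 with hb
    set c := n 0 * ν 0 + n 1 * ν 1 + n 2 * ν 2 with hc
    set s : ℝ := (1 - q)/2 with hs
    set t : ℝ := (1 - q)/2 - 1/3 with ht
    linear_combination (q^3*(a^2+a+1) + 3*q^2*t*(a+1) + 3*q*t^2) * hn
      + (-s^3*(b^2+b+1) + 3*s^2*t*(b+1) - 3*s*t^2) * hν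
      + ((-3*q^2*s*a + 3*q*s^2*b - 6*q*s*t)*c) * hnν
  refine ⟨h2, h3, fun F A B C => ?_⟩
  rw [h2, h3]
  ring

end
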